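/- arXiv:1412.3085 — 2 statements merged into one kernel-verified Lean document; each statement's English description precedes it below -/
import Mathlib

section
/- Let N ≥ 1 and b ∈ [0,π]. Then ((2π)^N N!)^{-1} ∫_{[−b,b]^N} ∏_{1≤i<j≤N} |e^{iθ_i} − e^{iθ_j}|² dθ_1⋯dθ_N = det C[b,N], where C[b,N] is the N×N matrix with entries (C[b,N])_{i,j} = (b/π) · sinc((j−i)b). -/
open MeasureTheory Real

/-- The squared modulus of the Vandermonde determinant of the points `e^{iθ_k}`:
`Δ(θ) = ∏_{1 ≤ i < j ≤ N} |e^{iθ_i} − e^{iθ_j}|²`. -/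
noncomputable def vdm2 {N : ℕ} (θ : Fin N → ℝ) : ℝ :=
  ∏ i : Fin N, ∏ j ∈ Finset.Ioi i,
    ‖Complex.exp ((θ i : ℂ) * Complex.I) - Complex.exp ((θ j : ℂ) * Complex.I)‖ ^ 2

/-- The cardinal sine: `sinc x = sin x / x` for `x ≠ 0`, and `sinc 0 = 1`. -/
noncomputable def sinc (x : ℝ) : ℝ := if x = 0 then 1 else Real.sin x / x


set_option maxHeartbeats 1000000 in

theorem integrable_pi_prod {n : ℕ} {E : Fin n → Type*}
    [∀ i, MeasurableSpace (E i)] (μ : ∀ i, Measure (E i)) [∀ i, SigmaFinite (μ i)]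
    {f : (i : Fin n) → E i → ℂ} (hf : ∀ i, Integrable (f i) (μ i)) :
    Integrable (fun (x : (i : Fin n) → E i) ↦ ∏ i, f i (x i)) (Measure.pi μ) := by
  induction n with
  | zero => simp only [Finset.univ_eq_empty, Finset.prod_empty,
      integrable_const_iff, one_ne_zero, Measure.pi_empty_univ, ENNReal.one_lt_top, or_true]
            exact Or.inr ⟨by simp [Measure.pi_empty_univ]⟩
  | succ n n_ih =>
      have := ((measurePreserving_piFinSuccAbove (fun i => (μ i)) 0).symm)
      rw [← this.integrable_comp_emb (MeasurableEquiv.measurableEmbedding _)]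
      simp_rw [MeasurableEquiv.piFinSuccAbove_symm_apply, Fin.insertNthEquiv,
        Fin.prod_univ_succ, Fin.insertNth_zero]
      simp only [Fin.zero_succAbove, cast_eq, Function.comp_def, Fin.cons_zero, Fin.cons_succ,
        Equiv.coe_fn_mk]
      have : Integrable (fun (x : (j : Fin n) → E (Fin.succ j)) ↦ ∏ j, f (Fin.succ j) (x j))
          (Measure.pi fun j => μ (Fin.succ j)) := n_ih _ (fun i ↦ hf _)
      exact Integrable.mul_prod (hf 0) this

theorem integral_pi_prod {n : ℕ} {E : Fin n → Type*}
    [∀ i, MeasurableSpace (E i)] (μ : ∀ i, Measure (E i)) [∀ i, SigmaFinite (μ i)]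
    (f : (i : Fin n) → E i → ℂ) :
    ∫ x : (i : Fin n) → E i, ∏ i, f i (x i) ∂(Measure.pi μ) = ∏ i, ∫ x, f i x ∂(μ i) := by
  induction n with
  | zero =>
      simp only [Finset.univ_eq_empty, Finset.prod_empty, integral_const,
        Measure.pi_empty_univ, ENNReal.toReal_one, smul_eq_mul, mul_one, one_smul]
      simp [Measure.real, Measure.pi_empty_univ]
  | succ n n_ih =>
      calc
        _ = ∫ x : E 0 × ((i : Fin n) → E (Fin.succ i)),
            f 0 x.1 * ∏ i : Fin n, f (Fin.succ i) (x.2 i) ∂((μ 0).prod (Measure.pi fun j => μ (Fin.succ j))) := by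
          rw [← ((measurePreserving_piFinSuccAbove (fun i => (μ i)) 0).symm).integral_comp']
          simp_rw [MeasurableEquiv.piFinSuccAbove_symm_apply, Fin.insertNthEquiv,
            Fin.prod_univ_succ, Fin.insertNth_zero, Equiv.coe_fn_mk, Fin.cons_succ,
            Fin.zero_succAbove, Fin.cons_zero]
          rfl
        _ = (∫ x, f 0 x ∂(μ 0)) * ∏ i : Fin n, ∫ (x : E (Fin.succ i)), f (Fin.succ i) x ∂(μ (Fin.succ i)) := by
          rw [← n_ih, ← integral_prod_mul]
        _ = ∏ i, ∫ x, f i x ∂(μ i) := by rw [Fin.prod_univ_succ]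

theorem pi_restrict {n : ℕ} (s : Fin n → Set ℝ) (hs : ∀ i, MeasurableSet (s i)) :
    (Measure.pi fun _ : Fin n => (volume : Measure ℝ)).restrict (Set.univ.pi s)
      = Measure.pi fun i => (volume : Measure ℝ).restrict (s i) := by
  refine (Measure.pi_eq fun t ht => ?_).symm
  rw [Measure.restrict_apply (MeasurableSet.univ_pi ht), ← Set.pi_inter_distrib,
    Measure.pi_pi]
  simp_rw [Measure.restrict_apply (ht _)]

theorem single_int (b : ℝ) (hb : 0 ≤ b) (c : ℝ) :
    ∫ x in Set.Icc (-b) b, Complex.exp ((x : ℂ) * c * Complex.I)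
      = ((2 * b * _root_.sinc (c * b) : ℝ) : ℂ) := by
  have hle : -b ≤ b := by linarith
  rw [integral_Icc_eq_integral_Ioc, ← intervalIntegral.integral_of_le hle]
  rcases eq_or_ne c 0 with rfl | hc
  · simp [_root_.sinc, Complex.ofReal_mul]; ring
  · have hbc : (c : ℂ) * Complex.I ≠ 0 := by
      simp [Complex.ofReal_eq_zero, hc, Complex.I_ne_zero]
    have : ∀ x : ℝ, (x : ℂ) * c * Complex.I = ((c : ℂ) * Complex.I) * x := by
      intro x; ring
    simp_rw [this]
    rw [integral_exp_mul_complex hbc]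
    have e1 : (c:ℂ) * Complex.I * b = ((c*b : ℝ) : ℂ) * Complex.I := by push_cast; ring
    have e2 : (c:ℂ) * Complex.I * (-b : ℝ) = (-(c*b : ℝ) : ℂ) * Complex.I := by push_cast; ring
    rw [e1, e2, Complex.exp_mul_I, Complex.exp_mul_I]
    rcases eq_or_ne b 0 with rfl | hb0
    · simp
    · have hcb : c * b ≠ 0 := mul_ne_zero hc hb0
      rw [_root_.sinc, if_neg hcb]
      rw [Complex.cos_neg, Complex.sin_neg]
      have : ((c*b:ℂ))= ((c*b:ℝ):ℂ) := by push_cast; ring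
      have hc' : (c:ℂ) ≠ 0 := Complex.ofReal_ne_zero.mpr hc
      have hb' : (b:ℂ) ≠ 0 := Complex.ofReal_ne_zero.mpr hb0
      field_simp
      push_cast
      field_simp
      ring

lemma vdm2_eq {N : ℕ} (θ : Fin N → ℝ) :
    vdm2 θ = Complex.normSq
      (Matrix.det (Matrix.vandermonde fun k => Complex.exp ((θ k : ℂ) * Complex.I))) := by
  rw [Matrix.det_vandermonde, map_prod]
  refine Finset.prod_congr rfl fun i _ => ?_
  rw [map_prod]
  refine Finset.prod_congr rfl fun j _ => ?_
  rw [← Complex.sq_norm, norm_sub_rev]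

lemma vdm2_expand {N : ℕ} (θ : Fin N → ℝ) :
    ((vdm2 θ : ℝ) : ℂ) =
      ∑ σ : Equiv.Perm (Fin N), ∑ τ : Equiv.Perm (Fin N),
        (((Equiv.Perm.sign σ : ℤ) : ℂ) * ((Equiv.Perm.sign τ : ℤ) : ℂ)) *
          ∏ i : Fin N, Complex.exp
            ((θ i : ℂ) * (((σ i : ℕ) : ℂ) - ((τ i : ℕ) : ℂ)) * Complex.I) := by
  set v : Fin N → ℂ := fun k => Complex.exp ((θ k : ℂ) * Complex.I) with hv
  have hdet : (Matrix.vandermonde v).det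
      = ∑ σ : Equiv.Perm (Fin N), ((Equiv.Perm.sign σ : ℤ) : ℂ) * ∏ i, v i ^ (σ i : ℕ) := by
    rw [← Matrix.det_transpose, Matrix.det_apply']
    refine Finset.sum_congr rfl fun σ _ => ?_
    simp [Matrix.vandermonde]
  have hconj : (starRingEnd ℂ) (Matrix.vandermonde v).det
      = ∑ τ : Equiv.Perm (Fin N), ((Equiv.Perm.sign τ : ℤ) : ℂ)
          * ∏ i, Complex.exp (-((θ i : ℂ) * Complex.I)) ^ (τ i : ℕ) := by
    rw [hdet, _root_.map_sum]
    refine Finset.sum_congr rfl fun τ _ => ?_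
    rw [map_mul, map_intCast, map_prod]
    refine congrArg _ (Finset.prod_congr rfl fun i _ => ?_)
    rw [map_pow, ← Complex.exp_conj]
    congr 1
    simp [Complex.conj_ofReal]
  rw [vdm2_eq, ← Complex.mul_conj, hconj, hdet, Finset.sum_mul_sum]
  refine Finset.sum_congr rfl fun σ _ => Finset.sum_congr rfl fun τ _ => ?_
  rw [mul_mul_mul_comm, ← Finset.prod_mul_distrib]
  refine congrArg _ (Finset.prod_congr rfl fun i _ => ?_)
  rw [← Complex.exp_nat_mul, ← Complex.exp_nat_mul, ← Complex.exp_add]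
  congr 1
  ring

lemma perm_sum {N : ℕ} (K : Matrix (Fin N) (Fin N) ℂ) (hsymm : K.transpose = K) :
    ∑ σ : Equiv.Perm (Fin N), ∑ τ : Equiv.Perm (Fin N),
        (((Equiv.Perm.sign σ : ℤ) : ℂ) * ((Equiv.Perm.sign τ : ℤ) : ℂ))
          * ∏ i : Fin N, K (σ i) (τ i)
      = (Nat.factorial N : ℂ) * K.det := by
  have inner : ∀ σ : Equiv.Perm (Fin N),
      ∑ τ : Equiv.Perm (Fin N),
        (((Equiv.Perm.sign σ : ℤ) : ℂ) * ((Equiv.Perm.sign τ : ℤ) : ℂ))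
          * ∏ i : Fin N, K (σ i) (τ i) = K.det := by
    intro σ
    rw [← Equiv.sum_comp (Equiv.mulRight σ)]
    have : ∀ ρ : Equiv.Perm (Fin N),
        (((Equiv.Perm.sign σ : ℤ) : ℂ) * ((Equiv.Perm.sign (ρ * σ) : ℤ) : ℂ))
            * ∏ i : Fin N, K (σ i) ((ρ * σ) i)
          = ((Equiv.Perm.sign ρ : ℤ) : ℂ) * ∏ i : Fin N, K i (ρ i) := by
      intro ρ
      have h1 : ∏ i : Fin N, K (σ i) ((ρ * σ) i) = ∏ i : Fin N, K i (ρ i) := by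
        simp only [Equiv.Perm.mul_apply]
        exact Equiv.prod_comp σ (fun j => K j (ρ j))
      rw [h1, map_mul]
      rcases Int.units_eq_one_or (Equiv.Perm.sign σ) with h | h <;>
        rcases Int.units_eq_one_or (Equiv.Perm.sign ρ) with h' | h' <;>
          simp [h, h'] <;> ring
    simp only [Equiv.coe_mulRight, this]
    rw [← hsymm, Matrix.det_transpose, Matrix.det_apply']
    rfl
  simp only [inner, Finset.sum_const, Finset.card_univ, Fintype.card_perm, Fintype.card_fin,
    nsmul_eq_mul]

lemma sinc_even (x : ℝ) : _root_.sinc (-x) = _root_.sinc x := by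
  unfold _root_.sinc
  rcases eq_or_ne x 0 with rfl | hx
  · simp
  · rw [if_neg (neg_ne_zero.mpr hx), if_neg hx, Real.sin_neg, neg_div_neg_eq]



set_option maxHeartbeats 1000000 in
lemma key_lemma (N : ℕ) (μ : Measure ℝ) [IsFiniteMeasure μ]
    (hint : ∀ a c : Fin N,
      Integrable (fun x : ℝ =>
        Complex.exp ((x : ℂ) * (((a : ℕ) : ℂ) - ((c : ℕ) : ℂ)) * Complex.I)) μ)
    (K : Matrix (Fin N) (Fin N) ℝ) (hsymm : K.transpose = K)
    (hval : ∀ a c : Fin N,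
      (∫ x, Complex.exp ((x : ℂ) * (((a : ℕ) : ℂ) - ((c : ℕ) : ℂ)) * Complex.I) ∂μ)
        = ((K a c : ℝ) : ℂ)) :
    (∫ θ, vdm2 θ ∂(Measure.pi fun _ : Fin N => μ))
      = (Nat.factorial N : ℝ) * K.det := by
  have hP : ∀ σ τ : Equiv.Perm (Fin N),
      Integrable (fun θ : Fin N → ℝ =>
        (((Equiv.Perm.sign σ : ℤ) : ℂ) * ((Equiv.Perm.sign τ : ℤ) : ℂ)) *
          ∏ i : Fin N, Complex.exp
            ((θ i : ℂ) * (((σ i : ℕ) : ℂ) - ((τ i : ℕ) : ℂ)) * Complex.I))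
        (Measure.pi fun _ : Fin N => μ) := fun σ τ =>
    (integrable_pi_prod (fun _ : Fin N => μ) (fun i => hint (σ i) (τ i))).const_mul _
  have key : ((∫ θ, vdm2 θ ∂(Measure.pi fun _ : Fin N => μ) : ℝ) : ℂ)
      = (Nat.factorial N : ℂ) * ((K.det : ℝ) : ℂ) := by
    calc ((∫ θ, vdm2 θ ∂(Measure.pi fun _ : Fin N => μ) : ℝ) : ℂ)
        = ∫ θ, ((vdm2 θ : ℝ) : ℂ) ∂(Measure.pi fun _ : Fin N => μ) :=
          (integral_ofReal (𝕜 := ℂ)).symm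
      _ = ∫ θ : Fin N → ℝ, ∑ σ : Equiv.Perm (Fin N), ∑ τ : Equiv.Perm (Fin N),
            (((Equiv.Perm.sign σ : ℤ) : ℂ) * ((Equiv.Perm.sign τ : ℤ) : ℂ)) *
              ∏ i : Fin N, Complex.exp
                ((θ i : ℂ) * (((σ i : ℕ) : ℂ) - ((τ i : ℕ) : ℂ)) * Complex.I)
            ∂(Measure.pi fun _ : Fin N => μ) := by
          refine integral_congr_ae (Filter.Eventually.of_forall fun θ => ?_)
          exact vdm2_expand θ
      _ = ∑ σ : Equiv.Perm (Fin N), ∫ θ : Fin N → ℝ, ∑ τ : Equiv.Perm (Fin N),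
            (((Equiv.Perm.sign σ : ℤ) : ℂ) * ((Equiv.Perm.sign τ : ℤ) : ℂ)) *
              ∏ i : Fin N, Complex.exp
                ((θ i : ℂ) * (((σ i : ℕ) : ℂ) - ((τ i : ℕ) : ℂ)) * Complex.I)
            ∂(Measure.pi fun _ : Fin N => μ) :=
          integral_finset_sum _ (fun σ _ => integrable_finset_sum _ (fun τ _ => hP σ τ))
      _ = ∑ σ : Equiv.Perm (Fin N), ∑ τ : Equiv.Perm (Fin N), ∫ θ : Fin N → ℝ,
            (((Equiv.Perm.sign σ : ℤ) : ℂ) * ((Equiv.Perm.sign τ : ℤ) : ℂ)) *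
              ∏ i : Fin N, Complex.exp
                ((θ i : ℂ) * (((σ i : ℕ) : ℂ) - ((τ i : ℕ) : ℂ)) * Complex.I)
            ∂(Measure.pi fun _ : Fin N => μ) :=
          Finset.sum_congr rfl fun σ _ =>
            integral_finset_sum _ (fun τ _ => hP σ τ)
      _ = ∑ σ : Equiv.Perm (Fin N), ∑ τ : Equiv.Perm (Fin N),
            (((Equiv.Perm.sign σ : ℤ) : ℂ) * ((Equiv.Perm.sign τ : ℤ) : ℂ)) *
              ∏ i : Fin N, ((K (σ i) (τ i) : ℝ) : ℂ) := by
          refine Finset.sum_congr rfl fun σ _ => Finset.sum_congr rfl fun τ _ => ?_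
          rw [integral_const_mul, integral_pi_prod (fun _ : Fin N => μ)
            (fun i x => Complex.exp ((x : ℂ) * (((σ i : ℕ) : ℂ) - ((τ i : ℕ) : ℂ)) * Complex.I))]
          exact congrArg _ (Finset.prod_congr rfl fun i _ => hval (σ i) (τ i))
      _ = (Nat.factorial N : ℂ) * ((K.det : ℝ) : ℂ) := by
          have hsymm' : (Complex.ofRealHom.mapMatrix K).transpose
              = Complex.ofRealHom.mapMatrix K := by
            simp only [RingHom.mapMatrix_apply]
            rw [← Matrix.transpose_map, hsymm]
          have hps := perm_sum (Complex.ofRealHom.mapMatrix K) hsymm'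
          simp only [RingHom.mapMatrix_apply, Matrix.map_apply,
            Complex.ofRealHom_eq_coe] at hps
          rw [hps, ← RingHom.mapMatrix_apply, ← RingHom.map_det]
          rfl
  rw [show ((Nat.factorial N : ℂ) * ((K.det : ℝ) : ℂ))
      = (((Nat.factorial N : ℝ) * K.det : ℝ) : ℂ) by push_cast; ring] at key
  exact_mod_cast key

/-- For `N ≥ 1` and `b ∈ [0,π]`,
`((2π)^N N!)⁻¹ ∫_{[−b,b]^N} ∏_{i<j} |e^{iθ_i} − e^{iθ_j}|² dθ = det C[b,N]`
where `(C[b,N])_{i,j} = (b/π)·sinc((j−i)b)`. -/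
theorem stmt3 (N : ℕ) (hN : 1 ≤ N) (b : ℝ) (hb : b ∈ Set.Icc (0 : ℝ) π) :
    ((2 * π) ^ N * (Nat.factorial N : ℝ))⁻¹ *
        ∫ θ in Set.univ.pi (fun _ : Fin N => Set.Icc (-b) b), vdm2 θ
      = Matrix.det (Matrix.of fun i j : Fin N =>
          (b / π) * _root_.sinc (((j.val : ℝ) - (i.val : ℝ)) * b)) := by
  obtain ⟨hb0, hbπ⟩ := hb
  set μ : Measure ℝ := volume.restrict (Set.Icc (-b) b) with hμ
  haveI : IsFiniteMeasure μ := by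
    constructor
    rw [hμ, Measure.restrict_apply_univ]
    exact measure_Icc_lt_top
  set Gr : Matrix (Fin N) (Fin N) ℝ :=
    Matrix.of (fun a c : Fin N => 2 * b * _root_.sinc (((c.val : ℝ) - (a.val : ℝ)) * b)) with hGr
  have hGrsymm : Gr.transpose = Gr := by
    ext a c
    simp only [Matrix.transpose_apply, hGr, Matrix.of_apply]
    rw [show (((a.val : ℝ) - (c.val : ℝ)) * b) = -(((c.val : ℝ) - (a.val : ℝ)) * b) by ring,
      sinc_even]
  have hrestr : (volume : Measure (Fin N → ℝ)).restrict (Set.univ.pi fun _ => Set.Icc (-b) b)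
      = Measure.pi fun _ : Fin N => μ := by
    rw [volume_pi, pi_restrict _ (fun _ => measurableSet_Icc)]
  have hint : ∀ a c : Fin N,
      Integrable (fun x : ℝ =>
        Complex.exp ((x : ℂ) * (((a : ℕ) : ℂ) - ((c : ℕ) : ℂ)) * Complex.I)) μ := by
    intro a c
    have hc : Continuous fun x : ℝ =>
        Complex.exp ((x : ℂ) * (((a : ℕ) : ℂ) - ((c : ℕ) : ℂ)) * Complex.I) := by
      fun_prop
    exact hc.integrableOn_Icc
  have hval : ∀ a c : Fin N,
      (∫ x, Complex.exp ((x : ℂ) * (((a : ℕ) : ℂ) - ((c : ℕ) : ℂ)) * Complex.I) ∂μ)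
        = ((Gr a c : ℝ) : ℂ) := by
    intro a c
    have h := single_int b hb0 (((a : ℕ) : ℝ) - ((c : ℕ) : ℝ))
    push_cast at h
    rw [hμ]
    rw [show ((Gr a c : ℝ) : ℂ)
        = ((2 * b * _root_.sinc ((((a : ℕ) : ℝ) - ((c : ℕ) : ℝ)) * b) : ℝ) : ℂ) by
      simp only [hGr, Matrix.of_apply]
      rw [show (((c.val : ℝ) - (a.val : ℝ)) * b) = -((((a : ℕ) : ℝ) - ((c : ℕ) : ℝ)) * b) by ring,
        sinc_even]]
    push_cast
    exact h
  rw [hrestr, key_lemma N μ hint Gr hGrsymm hval]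
  have hπ : (π : ℝ) ≠ 0 := Real.pi_ne_zero
  have hC : (Matrix.of fun i j : Fin N =>
        (b / π) * _root_.sinc (((j.val : ℝ) - (i.val : ℝ)) * b))
      = (2 * π)⁻¹ • Gr := by
    ext i j
    simp only [Matrix.of_apply, Matrix.smul_apply, hGr, smul_eq_mul]
    field_simp
  rw [hC, Matrix.det_smul]
  simp only [Fintype.card_fin, smul_eq_mul]
  have hfac : (Nat.factorial N : ℝ) ≠ 0 := Nat.cast_ne_zero.mpr (Nat.factorial_ne_zero N)
  have h2π : ((2 * π) ^ N : ℝ) ≠ 0 := pow_ne_zero _ (by positivity)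
  field_simp
  have : π ^ N * π⁻¹ ^ N * (1/2:ℝ) ^ N * 2 ^ N = 1 := by
    rw [← mul_pow, ← mul_pow, ← mul_pow, mul_inv_cancel₀ hπ]; norm_num
  linear_combination (-Gr.det) * this
end

section
/- Let N ≥ 1 and 0 ≤ a < π. Then ∫_{[−a,a]^N} ( Σ_{i=1}^N 1/(1 + e^{iθ_i}) ) · ∏_{1≤i<j≤N} |e^{iθ_i} − e^{iθ_j}|² dθ_1⋯dθ_N = (N/2) · ∫_{[−a,a]^N} ∏_{1≤i<j≤N} |e^{iθ_i} − e^{iθ_j}|² dθ_1⋯dθ_N, where both sides are complex numbers (in particular the left-hand side is real). -/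
open MeasureTheory Real

lemma exp_neg_mul_I_eq_conj (x : ℝ) :
    Complex.exp (((-x : ℝ) : ℂ) * Complex.I) = starRingEnd ℂ (Complex.exp ((x : ℂ) * Complex.I)) := by
  rw [← Complex.exp_conj]
  congr 1
  simp [Complex.conj_ofReal]

lemma vdm2_neg {N : ℕ} (θ : Fin N → ℝ) : vdm2 (-θ) = vdm2 θ := by
  unfold vdm2
  refine Finset.prod_congr rfl fun i _ => Finset.prod_congr rfl fun j _ => ?_
  congr 1
  simp only [Pi.neg_apply]
  rw [exp_neg_mul_I_eq_conj, exp_neg_mul_I_eq_conj, ← map_sub, Complex.norm_conj]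

lemma continuous_vdm2 {N : ℕ} : Continuous (vdm2 (N := N)) := by
  unfold vdm2
  refine continuous_finset_prod _ fun i _ => continuous_finset_prod _ fun j _ => ?_
  exact (continuous_norm.comp
    ((Complex.continuous_exp.comp (by fun_prop)).sub
      (Complex.continuous_exp.comp (by fun_prop)))).pow 2

lemma one_add_exp_ne_zero {θ : ℝ} (h : |θ| < π) :
    (1 : ℂ) + Complex.exp ((θ : ℂ) * Complex.I) ≠ 0 := by
  intro h0
  have habs := abs_lt.1 h
  have hcos : -1 < Real.cos θ := by
    have h2 : Real.cos (θ / 2) ^ 2 = 1 / 2 + Real.cos θ / 2 := by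
      have := Real.cos_sq (θ / 2)
      rw [show 2 * (θ / 2) = θ by ring] at this
      exact this
    have hpos : 0 < Real.cos (θ / 2) :=
      Real.cos_pos_of_mem_Ioo ⟨by linarith [habs.1], by linarith [habs.2]⟩
    nlinarith
  have hre : ((1 : ℂ) + Complex.exp ((θ : ℂ) * Complex.I)).re = 1 + Real.cos θ := by
    simp [Complex.exp_ofReal_mul_I_re]
  rw [h0] at hre
  simp at hre
  linarith

lemma inv_add_inv_neg {θ : ℝ} (h : |θ| < π) :
    ((1 : ℂ) + Complex.exp ((θ : ℂ) * Complex.I))⁻¹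
      + ((1 : ℂ) + Complex.exp (((-θ : ℝ) : ℂ) * Complex.I))⁻¹ = 1 := by
  have hw : Complex.exp ((θ : ℂ) * Complex.I) ≠ 0 := Complex.exp_ne_zero _
  have h1 : (1 : ℂ) + Complex.exp ((θ : ℂ) * Complex.I) ≠ 0 := one_add_exp_ne_zero h
  have hexp : Complex.exp (((-θ : ℝ) : ℂ) * Complex.I)
      = (Complex.exp ((θ : ℂ) * Complex.I))⁻¹ := by
    rw [← Complex.exp_neg]
    congr 1
    push_cast
    ring
  rw [hexp]
  have h2 : (1 : ℂ) + (Complex.exp ((θ : ℂ) * Complex.I))⁻¹ ≠ 0 := by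
    have heq : (1 : ℂ) + (Complex.exp ((θ : ℂ) * Complex.I))⁻¹
        = (Complex.exp ((θ : ℂ) * Complex.I))⁻¹ * (Complex.exp ((θ : ℂ) * Complex.I) + 1) := by
      field_simp
    rw [heq]
    exact mul_ne_zero (inv_ne_zero hw) (by rw [add_comm]; exact h1)
  field_simp
  linear_combination Complex.exp ((θ : ℂ) * Complex.I) * mul_inv_cancel₀ h1

/-- For `N ≥ 1` and `0 ≤ a < π`,
`∫_{[−a,a]^N} (Σ_i 1/(1+e^{iθ_i})) ∏_{i<j} |e^{iθ_i} − e^{iθ_j}|² dθ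
 = (N/2) ∫_{[−a,a]^N} ∏_{i<j} |e^{iθ_i} − e^{iθ_j}|² dθ`,
both sides regarded as complex numbers. -/
theorem stmt14 (N : ℕ) (hN : 1 ≤ N) (a : ℝ) (ha0 : 0 ≤ a) (haπ : a < π) :
    ∫ θ in Set.univ.pi (fun _ : Fin N => Set.Icc (-a) a),
        (∑ i : Fin N, (1 + Complex.exp ((θ i : ℂ) * Complex.I))⁻¹) * ((vdm2 θ : ℝ) : ℂ)
      = ((N : ℂ) / 2) *
        (((∫ θ in Set.univ.pi (fun _ : Fin N => Set.Icc (-a) a), vdm2 θ) : ℝ) : ℂ) := by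
  set S := Set.univ.pi (fun _ : Fin N => Set.Icc (-a) a) with hSdef
  have hSm : MeasurableSet S := MeasurableSet.univ_pi fun _ => measurableSet_Icc
  have hSc : IsCompact S := isCompact_univ_pi fun _ => isCompact_Icc
  have hmemS : ∀ θ : Fin N → ℝ, θ ∈ S ↔ ∀ i, -a ≤ θ i ∧ θ i ≤ a := by
    intro θ
    simp only [hSdef, Set.mem_pi, Set.mem_univ, true_implies, Set.mem_Icc]
  have hnegS : ∀ θ : Fin N → ℝ, -θ ∈ S ↔ θ ∈ S := by
    intro θ
    rw [hmemS, hmemS]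
    constructor <;> intro h i <;> have := h i <;>
      simp only [Pi.neg_apply] at * <;> constructor <;> linarith [this.1, this.2]
  have habs : ∀ θ : Fin N → ℝ, θ ∈ S → ∀ i, |θ i| < π := by
    intro θ hθ i
    have := (hmemS θ).1 hθ i
    rw [abs_lt]
    constructor <;> linarith
  set F : (Fin N → ℝ) → ℂ := fun θ =>
    (∑ i : Fin N, (1 + Complex.exp ((θ i : ℂ) * Complex.I))⁻¹) * ((vdm2 θ : ℝ) : ℂ) with hF
  have hFcont : ContinuousOn F S := by
    apply ContinuousOn.mul
    · apply continuousOn_finset_sum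
      intro i _
      apply ContinuousOn.inv₀
      · exact (continuous_const.add (Complex.continuous_exp.comp (by fun_prop))).continuousOn
      · intro θ hθ
        exact one_add_exp_ne_zero (habs θ hθ i)
    · exact (Complex.continuous_ofReal.comp continuous_vdm2).continuousOn
  have hGcont : ContinuousOn (fun θ => F (-θ)) S :=
    hFcont.comp continuous_neg.continuousOn (fun θ hθ => (hnegS θ).2 hθ)
  have hFi : IntegrableOn F S := hFcont.integrableOn_compact hSc
  have hGi : IntegrableOn (fun θ => F (-θ)) S := hGcont.integrableOn_compact hSc
  have hsub : ∫ θ in S, F θ = ∫ θ in S, F (-θ) := by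
    rw [← integral_indicator hSm, ← integral_indicator hSm,
      ← integral_neg_eq_self (S.indicator F) volume]
    congr 1
    funext θ
    by_cases h : θ ∈ S
    · rw [Set.indicator_of_mem ((hnegS θ).2 h), Set.indicator_of_mem h]
    · rw [Set.indicator_of_notMem (fun hc => h ((hnegS θ).1 hc)),
        Set.indicator_of_notMem h]
  have hsum : ∀ θ ∈ S, F θ + F (-θ) = (N : ℂ) * ((vdm2 θ : ℝ) : ℂ) := by
    intro θ hθ
    simp only [hF, vdm2_neg, Pi.neg_apply]
    rw [← add_mul, ← Finset.sum_add_distrib]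
    have : ∀ i ∈ Finset.univ, ((1 : ℂ) + Complex.exp ((θ i : ℂ) * Complex.I))⁻¹
        + ((1 : ℂ) + Complex.exp (((-θ i : ℝ) : ℂ) * Complex.I))⁻¹ = 1 :=
      fun i _ => inv_add_inv_neg (habs θ hθ i)
    rw [Finset.sum_congr rfl this, Finset.sum_const, Finset.card_univ, Fintype.card_fin,
      nsmul_eq_mul, mul_one]
  have hdouble : (2 : ℂ) * ∫ θ in S, F θ = (N : ℂ) * ((∫ θ in S, vdm2 θ : ℝ) : ℂ) := by
    have h1 : (2 : ℂ) * ∫ θ in S, F θ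
        = (∫ θ in S, F θ) + ∫ θ in S, F (-θ) := by
      rw [← hsub]; ring
    rw [h1, ← integral_add hFi hGi]
    rw [setIntegral_congr_fun hSm (g := fun θ => (N : ℂ) * ((vdm2 θ : ℝ) : ℂ)) hsum]
    rw [integral_const_mul]
    congr 1
    exact integral_ofReal
  linear_combination hdouble / 2
end
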